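/- A linear subspace H of gl_n(ℂ) containing the Borel subalgebra b of upper triangular matrices and closed under bracket with b ([b, H] ⊆ H) is uniquely determined by a Hessenberg function h: {1,…,n} → {1,…,n} satisfying h(i) ≥ i for all i and h(i) ≥ h(i−1) for all i ≥ 2, via the rule that H = {X ∈ gl_n(ℂ) : X_{ij} = 0 whenever i > h(j)}. Conversely, for any function h satisfying these two conditions, the space H defined by this rule contains b and satisfies [b, H] ⊆ H. -/

import Mathlib

/-- The linear subspace of `gl_n(ℂ)` determined by a function `h : Fin n → Fin n`:
matrices `X` with `X i j = 0` whenever `i > h j`.  For `h = id` this is the Borel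
subalgebra `b` of upper triangular matrices. -/
noncomputable def hessSpace {n : ℕ} (h : Fin n → Fin n) :
    Submodule ℂ (Matrix (Fin n) (Fin n) ℂ) where
  carrier := {X | ∀ i j, h j < i → X i j = 0}
  add_mem' := by
    intro a b ha hb i j hij
    simp [Matrix.add_apply, ha i j hij, hb i j hij]
  zero_mem' := by intro i j _; simp
  smul_mem' := by
    intro c a ha i j hij
    simp [Matrix.smul_apply, ha i j hij]

open Matrix

lemma std_mem_hessSpace {n : ℕ} {h : Fin n → Fin n} {i j : Fin n} (hij : i ≤ h j) (c : ℂ) :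
    Matrix.single i j c ∈ hessSpace h := by
  intro a b hab
  apply Matrix.single_apply_of_ne
  rintro ⟨rfl, rfl⟩
  exact absurd hab (not_lt.mpr hij)

lemma le_of_std_mem_hessSpace {n : ℕ} {h : Fin n → Fin n} {i j : Fin n}
    (hm : Matrix.single i j (1 : ℂ) ∈ hessSpace h) : i ≤ h j := by
  by_contra hc
  have := hm i j (not_le.mp hc)
  simp at this


lemma key_identity {n : ℕ} (X : Matrix (Fin n) (Fin n) ℂ) {i j : Fin n} (hij : i ≠ j) :
    X i j • Matrix.single i j (1 : ℂ) =
      (-(2 : ℂ)⁻¹) •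
        ((Matrix.single i i (1 : ℂ) *
            (Matrix.single j j (1 : ℂ) * X - X * Matrix.single j j (1 : ℂ)) -
          (Matrix.single j j (1 : ℂ) * X - X * Matrix.single j j (1 : ℂ)) *
            Matrix.single i i (1 : ℂ)) -
        (Matrix.single j j (1 : ℂ) *
            (Matrix.single i i (1 : ℂ) *
              (Matrix.single j j (1 : ℂ) * X - X * Matrix.single j j (1 : ℂ)) -
            (Matrix.single j j (1 : ℂ) * X - X * Matrix.single j j (1 : ℂ)) *
              Matrix.single i i (1 : ℂ)) -
          (Matrix.single i i (1 : ℂ) *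
              (Matrix.single j j (1 : ℂ) * X - X * Matrix.single j j (1 : ℂ)) -
            (Matrix.single j j (1 : ℂ) * X - X * Matrix.single j j (1 : ℂ)) *
              Matrix.single i i (1 : ℂ)) * Matrix.single j j (1 : ℂ))) := by
  have hji : j ≠ i := hij.symm
  ext a b
  simp only [Matrix.sub_apply, Matrix.smul_apply, Matrix.sub_mul, Matrix.mul_sub, smul_eq_mul]
  by_cases hai : a = i <;> by_cases haj : a = j <;> by_cases hbi : b = i <;>
    by_cases hbj : b = j <;> simp_all <;>
    first
      | ring1
      | (right; apply single_apply_of_ne; rintro ⟨h1, h2⟩; simp_all)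
      | (left; apply single_apply_of_ne; rintro ⟨h1, h2⟩; simp_all)

section Move

variable {n : ℕ} {H : Submodule ℂ (Matrix (Fin n) (Fin n) ℂ)}
  (hb : hessSpace id ≤ H)
  (hbr : ∀ A ∈ hessSpace (n := n) id, ∀ X ∈ H, A * X - X * A ∈ H)

include hb hbr

lemma row_move {i i' j : Fin n} (h1 : i' ≤ i)
    (hm : Matrix.single i j (1 : ℂ) ∈ H) : Matrix.single i' j (1 : ℂ) ∈ H := by
  have hA : Matrix.single i' i (1 : ℂ) ∈ hessSpace id := std_mem_hessSpace h1 1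
  have hk := hbr _ hA _ hm
  by_cases hji : j = i'
  · subst hji
    rw [single_mul_single_same, single_mul_single_same, one_mul] at hk
    have hd : Matrix.single i i (1 : ℂ) ∈ H := hb (std_mem_hessSpace le_rfl 1)
    have := H.add_mem hk hd
    simpa using this
  · rw [single_mul_single_same, single_mul_single_of_ne (h := hji), one_mul, sub_zero] at hk
    exact hk

lemma col_move {i j j' : Fin n} (h1 : j ≤ j')
    (hm : Matrix.single i j (1 : ℂ) ∈ H) : Matrix.single i j' (1 : ℂ) ∈ H := by
  have hA : Matrix.single j j' (1 : ℂ) ∈ hessSpace id := std_mem_hessSpace h1 1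
  have hk := hbr _ hA _ hm
  rw [single_mul_single_same, one_mul] at hk
  by_cases hji : j' = i
  · subst hji
    rw [single_mul_single_same, one_mul] at hk
    have hd : Matrix.single j j (1 : ℂ) ∈ H := hb (std_mem_hessSpace le_rfl 1)
    have := H.sub_mem hd hk
    simpa using this
  · rw [single_mul_single_of_ne (h := hji), zero_sub] at hk
    have := H.neg_mem hk
    simpa using this

omit hb in
lemma component_mem {X : Matrix (Fin n) (Fin n) ℂ} (hX : X ∈ H) {i j : Fin n} (hij : i ≠ j) :
    X i j • Matrix.single i j (1 : ℂ) ∈ H := by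
  have hDjb : Matrix.single j j (1 : ℂ) ∈ hessSpace id := std_mem_hessSpace le_rfl 1
  have hDib : Matrix.single i i (1 : ℂ) ∈ hessSpace id := std_mem_hessSpace le_rfl 1
  have hYm := hbr _ hDjb _ hX
  have hZm := hbr _ hDib _ hYm
  have hWm := hbr _ hDjb _ hZm
  rw [key_identity X hij]
  exact H.smul_mem _ (H.sub_mem hZm hWm)

end Move

/-- a linear subspace `H ⊆ gl_n(ℂ)` containing the Borel subalgebra `b`
of upper triangular matrices and satisfying `[b, H] ⊆ H` is uniquely determined by a
Hessenberg function `h` (`h i ≥ i`, `h` nondecreasing) via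
`H = {X : X i j = 0 whenever i > h j}`; conversely for any such `h`, the space so
defined contains `b` and satisfies `[b, H] ⊆ H`. -/
theorem statement4 {n : ℕ} :
    (∀ H : Submodule ℂ (Matrix (Fin n) (Fin n) ℂ),
      hessSpace id ≤ H →
      (∀ A ∈ hessSpace (n := n) id, ∀ X ∈ H, A * X - X * A ∈ H) →
      ∃! h : Fin n → Fin n, (∀ i, i ≤ h i) ∧ Monotone h ∧ H = hessSpace h) ∧
    (∀ h : Fin n → Fin n, (∀ i, i ≤ h i) → Monotone h →
      hessSpace id ≤ hessSpace h ∧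
      ∀ A ∈ hessSpace (n := n) id, ∀ X ∈ hessSpace h, A * X - X * A ∈ hessSpace h) := by
  constructor
  · intro H hb hbr
    classical
    -- the Hessenberg function associated to `H`
    have hne : ∀ j : Fin n,
        ((Finset.univ : Finset (Fin n)).filter fun i => Matrix.single i j (1 : ℂ) ∈ H).Nonempty := by
      intro j
      exact ⟨j, Finset.mem_filter.mpr ⟨Finset.mem_univ _, hb (std_mem_hessSpace le_rfl 1)⟩⟩
    set h : Fin n → Fin n := fun j =>
      ((Finset.univ : Finset (Fin n)).filter fun i => Matrix.single i j (1 : ℂ) ∈ H).max' (hne j) with hdef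
    have hmem : ∀ j, Matrix.single (h j) j (1 : ℂ) ∈ H := by
      intro j
      have := Finset.max'_mem _ (hne j)
      simpa using (Finset.mem_filter.mp this).2
    have hiff : ∀ i j : Fin n, Matrix.single i j (1 : ℂ) ∈ H ↔ i ≤ h j := by
      intro i j
      constructor
      · intro hm
        show i ≤ ((Finset.univ : Finset (Fin n)).filter
          fun i => Matrix.single i j (1 : ℂ) ∈ H).max' (hne j)
        exact Finset.le_max' _ i (Finset.mem_filter.mpr ⟨Finset.mem_univ i, hm⟩)
      · intro hle
        exact row_move hb hbr hle (hmem j)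
    have hge : ∀ j, j ≤ h j := fun j => (hiff j j).mp (hb (std_mem_hessSpace le_rfl 1))
    have hmono : Monotone h := by
      intro j j' hjj'
      exact (hiff (h j) j').mp (col_move hb hbr hjj' (hmem j))
    have hHeq : H = hessSpace h := by
      apply le_antisymm
      · intro X hX i j hij
        have hij' : i ≠ j := by
          intro e; exact absurd hij (not_lt.mpr (e ▸ hge j))
        by_contra hne0
        have hc : X i j • Matrix.single i j (1 : ℂ) ∈ H := component_mem hbr hX hij'
        have : Matrix.single i j (1 : ℂ) ∈ H := by
          have := H.smul_mem (X i j)⁻¹ hc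
          rwa [smul_smul, inv_mul_cancel₀ hne0, one_smul] at this
        exact absurd ((hiff i j).mp this) (not_le.mpr hij)
      · intro X hX
        rw [matrix_eq_sum_single X]
        apply H.sum_mem
        intro i _
        apply H.sum_mem
        intro j _
        by_cases hc : h j < i
        · rw [hX i j hc]
          simp only [single_zero]
          exact H.zero_mem
        · have : Matrix.single i j (X i j) = X i j • Matrix.single i j (1 : ℂ) := by
            simp
          rw [this]
          exact H.smul_mem _ ((hiff i j).mpr (not_lt.mp hc))
    refine ⟨h, ⟨hge, hmono, hHeq⟩, ?_⟩
    rintro h' ⟨hge', _, hHeq'⟩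
    funext j
    apply le_antisymm
    · have : Matrix.single (h' j) j (1 : ℂ) ∈ H := by
        rw [hHeq']; exact std_mem_hessSpace le_rfl 1
      exact (hiff (h' j) j).mp this
    · have : Matrix.single (h j) j (1 : ℂ) ∈ hessSpace h' := by
        rw [← hHeq']; exact hmem j
      exact le_of_std_mem_hessSpace this
  · intro h hge hmono
    constructor
    · intro X hX i j hij
      exact hX i j (lt_of_le_of_lt (hge j) hij)
    · intro A hA X hX i j hij
      simp only [Matrix.sub_apply, Matrix.mul_apply]
      rw [Finset.sum_eq_zero, Finset.sum_eq_zero, sub_zero]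
      · intro k _
        by_cases hk : k ≤ j
        · rw [hX i k (lt_of_le_of_lt (hmono hk) hij), zero_mul]
        · rw [hA k j (not_le.mp hk), mul_zero]
      · intro k _
        by_cases hk : k < i
        · rw [hA i k hk, zero_mul]
        · rw [hX k j (lt_of_lt_of_le hij (not_lt.mp hk)), mul_zero]
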